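/- arXiv:1711.02377 — 2 statements merged into one kernel-verified Lean document; each statement's English description precedes it below -/
import Mathlib

section
/- Let A be a real M×N matrix such that AA* is invertible, and let γ_t(A) denote its preconditioned restricted isometry constant of order t. Let u, v ∈ ℝ^N be vectors with supp(u) = T′ and supp(v) = T″. If |T′ ∪ T″| ≤ t, then |⟨u, (I − A*(AA*)⁻¹A)v⟩| ≤ γ_t(A) · ‖u‖₂ · ‖v‖₂. -/
open Matrix

/-- The Euclidean (ℓ²) norm of a vector in ℝⁿ. -/
noncomputable def norm2 {n : ℕ} (x : Fin n → ℝ) : ℝ := Real.sqrt (∑ i, x i ^ 2)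

/-- `x` is `s`-sparse: it has at most `s` nonzero entries. -/
def sparse {n : ℕ} (s : ℕ) (x : Fin n → ℝ) : Prop :=
  (Finset.univ.filter fun i => x i ≠ 0).card ≤ s

/-- The positive semidefinite square root of a positive semidefinite matrix
(the definition of `Matrix.PosSemidef.sqrt` in the older Mathlib). -/
noncomputable def posSemidefSqrt {n : Type*} [Fintype n] [DecidableEq n] {A : Matrix n n ℝ}
    (hA : A.PosSemidef) : Matrix n n ℝ :=
  (hA.1.eigenvectorUnitary : Matrix n n ℝ) * diagonal ((↑) ∘ (√·) ∘ hA.1.eigenvalues) *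
    (star hA.1.eigenvectorUnitary : Matrix n n ℝ)

/-- The preconditioned matrix `(AAᴴ)^{-1/2} A`, where `(AAᴴ)^{-1/2}` is the inverse of the
positive semidefinite square root of `AAᴴ`. -/
noncomputable def precond {M N : ℕ} (A : Matrix (Fin M) (Fin N) ℝ) :
    Matrix (Fin M) (Fin N) ℝ :=
  (posSemidefSqrt (Matrix.posSemidef_self_mul_conjTranspose A))⁻¹ * A

/-- The preconditioned restricted isometry constant `γ_s(A)`: the smallest `γ ≥ 0` such that
`(1-γ)‖x‖₂² ≤ ‖(AAᴴ)^{-1/2}Ax‖₂²` for all `s`-sparse `x`. -/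
noncomputable def pripConst {M N : ℕ} (A : Matrix (Fin M) (Fin N) ℝ) (s : ℕ) : ℝ :=
  sInf {γ : ℝ | 0 ≤ γ ∧ ∀ x : Fin N → ℝ, sparse s x →
    (1 - γ) * norm2 x ^ 2 ≤ norm2 ((precond A).mulVec x) ^ 2}

lemma posSemidefSqrt_mul_self {n : Type*} [Fintype n] [DecidableEq n] {A : Matrix n n ℝ}
    (hA : A.PosSemidef) : posSemidefSqrt hA * posSemidefSqrt hA = A := by
  have hU : (star hA.1.eigenvectorUnitary : Matrix n n ℝ) * hA.1.eigenvectorUnitary = 1 :=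
    Unitary.coe_star_mul_self _
  have hD : diagonal ((↑) ∘ (√·) ∘ hA.1.eigenvalues) * diagonal ((↑) ∘ (√·) ∘ hA.1.eigenvalues)
      = diagonal (RCLike.ofReal ∘ hA.1.eigenvalues : n → ℝ) := by
    rw [diagonal_mul_diagonal]
    congr 1
    funext i
    simp [Real.mul_self_sqrt (hA.eigenvalues_nonneg i)]
  have hspec : (hA.1.eigenvectorUnitary : Matrix n n ℝ) * diagonal (RCLike.ofReal ∘ hA.1.eigenvalues : n → ℝ)
      * (star hA.1.eigenvectorUnitary : Matrix n n ℝ) = A := by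
    have := hA.1.spectral_theorem
    rw [Unitary.conjStarAlgAut_apply] at this
    exact this.symm
  unfold posSemidefSqrt
  calc _ = (hA.1.eigenvectorUnitary : Matrix n n ℝ) * diagonal ((↑) ∘ (√·) ∘ hA.1.eigenvalues) *
      ((star hA.1.eigenvectorUnitary : Matrix n n ℝ) * (hA.1.eigenvectorUnitary : Matrix n n ℝ)) *
      diagonal ((↑) ∘ (√·) ∘ hA.1.eigenvalues) * (star hA.1.eigenvectorUnitary : Matrix n n ℝ) := by
        simp only [Matrix.mul_assoc]
    _ = (hA.1.eigenvectorUnitary : Matrix n n ℝ) * (diagonal ((↑) ∘ (√·) ∘ hA.1.eigenvalues) *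
      diagonal ((↑) ∘ (√·) ∘ hA.1.eigenvalues)) * (star hA.1.eigenvectorUnitary : Matrix n n ℝ) := by
        rw [hU, Matrix.mul_one]; simp only [Matrix.mul_assoc]
    _ = A := by rw [hD]; exact hspec

lemma posSemidefSqrt_conjTranspose {n : Type*} [Fintype n] [DecidableEq n] {A : Matrix n n ℝ}
    (hA : A.PosSemidef) : (posSemidefSqrt hA)ᴴ = posSemidefSqrt hA := by
  unfold posSemidefSqrt
  rw [← star_eq_conjTranspose, star_mul, star_mul, star_star, star_eq_conjTranspose (diagonal _),
    diagonal_conjTranspose, star_trivial, Matrix.mul_assoc]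

lemma norm2_sq_eq {n : ℕ} (x : Fin n → ℝ) : norm2 x ^ 2 = x ⬝ᵥ x := by
  have h : x ⬝ᵥ x = ∑ i, x i ^ 2 := by
    simp [dotProduct, sq]
  rw [h, norm2, Real.sq_sqrt]
  exact Finset.sum_nonneg fun i _ => sq_nonneg _

lemma norm2_eq_sqrt_dot {n : ℕ} (x : Fin n → ℝ) : norm2 x = Real.sqrt (x ⬝ᵥ x) := by
  rw [norm2]
  congr 1
  simp [dotProduct, sq]

lemma dot_self_nonneg {n : ℕ} (x : Fin n → ℝ) : 0 ≤ x ⬝ᵥ x :=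
  Finset.sum_nonneg fun i _ => mul_self_nonneg _

/-- Basic properties of `pripConst`. -/
lemma pripConst_spec {M N : ℕ} (A : Matrix (Fin M) (Fin N) ℝ) (s : ℕ) :
    0 ≤ pripConst A s ∧ ∀ x : Fin N → ℝ, sparse s x →
      (1 - pripConst A s) * norm2 x ^ 2 ≤ norm2 ((precond A).mulVec x) ^ 2 := by
  set Sset : Set ℝ := {γ : ℝ | 0 ≤ γ ∧ ∀ x : Fin N → ℝ, sparse s x →
    (1 - γ) * norm2 x ^ 2 ≤ norm2 ((precond A).mulVec x) ^ 2} with hSset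
  have hprip : pripConst A s = sInf Sset := rfl
  have hne : (1:ℝ) ∈ Sset := by
    refine ⟨zero_le_one, fun x hx => ?_⟩
    have : (1 - (1:ℝ)) * norm2 x ^ 2 = 0 := by ring
    rw [this]
    exact sq_nonneg _
  have h0 : 0 ≤ sInf Sset := le_csInf ⟨1, hne⟩ fun γ hγ => hγ.1
  refine ⟨hprip ▸ h0, fun x hx => ?_⟩
  rw [hprip]
  set c := norm2 x ^ 2 with hc
  set r := norm2 ((precond A).mulVec x) ^ 2 with hr
  have hcnn : 0 ≤ c := sq_nonneg _
  have hrnn : 0 ≤ r := sq_nonneg _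
  rcases eq_or_lt_of_le hcnn with h | h
  · rw [← h]
    simpa using hrnn
  · have key : (c - r) / c ≤ sInf Sset := by
      refine le_csInf ⟨1, hne⟩ fun γ hγ => ?_
      have h2 := hγ.2 x hx
      rw [div_le_iff₀ h]
      nlinarith
    have step : (1 - sInf Sset) * c ≤ (1 - (c - r) / c) * c :=
      mul_le_mul_of_nonneg_right (by linarith) hcnn
    calc (1 - sInf Sset) * c ≤ (1 - (c - r) / c) * c := step
      _ = r := by field_simp; ring

theorem stmt0 {M N : ℕ} (A : Matrix (Fin M) (Fin N) ℝ) (hA : IsUnit (A * Aᴴ).det)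
    (t : ℕ) (u v : Fin N → ℝ) (T' T'' : Finset (Fin N))
    (hu : ∀ i, u i ≠ 0 ↔ i ∈ T') (hv : ∀ i, v i ≠ 0 ↔ i ∈ T'')
    (hT : (T' ∪ T'').card ≤ t) :
    |u ⬝ᵥ (1 - Aᴴ * (A * Aᴴ)⁻¹ * A).mulVec v| ≤ pripConst A t * norm2 u * norm2 v := by
  classical
  obtain ⟨hγ0, hγprop⟩ := pripConst_spec A t
  set γ := pripConst A t with hγdef
  have hPSD := Matrix.posSemidef_self_mul_conjTranspose A
  set S := posSemidefSqrt hPSD with hSdef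
  have hSS : S * S = A * Aᴴ := posSemidefSqrt_mul_self hPSD
  have hSH : Sᴴ = S := posSemidefSqrt_conjTranspose hPSD
  have hSu : IsUnit S.det := by
    have hdet : S.det * S.det = (A * Aᴴ).det := by rw [← Matrix.det_mul, hSS]
    exact isUnit_of_mul_isUnit_left (hdet ▸ hA)
  have h1 : S * S⁻¹ = 1 := Matrix.mul_nonsing_inv S hSu
  have h2 : S⁻¹ * S = 1 := Matrix.nonsing_inv_mul S hSu
  set B := precond A with hBdef
  have hB : B = S⁻¹ * A := rfl
  have hBBH : B * Bᴴ = 1 := by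
    rw [hB, Matrix.conjTranspose_mul, Matrix.conjTranspose_nonsing_inv, hSH]
    calc S⁻¹ * A * (Aᴴ * S⁻¹) = S⁻¹ * ((A * Aᴴ) * S⁻¹) := by
          simp [Matrix.mul_assoc]
      _ = S⁻¹ * (S * (S * S⁻¹)) := by rw [← hSS, Matrix.mul_assoc]
      _ = 1 := by rw [h1, mul_one, h2]
  set P := Bᴴ * B with hPdef
  have hinv : (A * Aᴴ)⁻¹ = S⁻¹ * S⁻¹ := by rw [← hSS, Matrix.mul_inv_rev]
  have hPeq : Aᴴ * (A * Aᴴ)⁻¹ * A = P := by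
    rw [hinv, hPdef, hB, Matrix.conjTranspose_mul, Matrix.conjTranspose_nonsing_inv, hSH]
    simp [Matrix.mul_assoc]
  have hPP : P * P = P := by
    calc P * P = Bᴴ * ((B * Bᴴ) * B) := by simp [hPdef, Matrix.mul_assoc]
      _ = P := by rw [hBBH, Matrix.one_mul, hPdef]
  have hPH : Pᴴ = P := by simp [hPdef, Matrix.conjTranspose_mul]
  have hPT : Pᵀ = P := by
    have : Pᴴ = Pᵀ := by ext i j; simp [Matrix.conjTranspose_apply]
    rw [← this, hPH]
  set Q : Matrix (Fin N) (Fin N) ℝ := 1 - P with hQdef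
  have hQQ : Q * Q = Q := by
    simp only [hQdef, Matrix.sub_mul, Matrix.mul_sub, Matrix.one_mul, Matrix.mul_one, hPP]
    abel
  have hQT : Qᵀ = Q := by
    simp [hQdef, Matrix.transpose_sub, hPT]
  -- symmetric dot product identities
  have hdotQ : ∀ x y : Fin N → ℝ, x ⬝ᵥ Q.mulVec y = (Q.mulVec x) ⬝ᵥ (Q.mulVec y) := by
    intro x y
    conv_lhs => rw [← hQQ]
    rw [← Matrix.mulVec_mulVec, Matrix.dotProduct_mulVec]
    congr 1
    conv_lhs => rw [← hQT]
    rw [Matrix.vecMul_transpose]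
  have hdotP : ∀ x : Fin N → ℝ, x ⬝ᵥ P.mulVec x = (B.mulVec x) ⬝ᵥ (B.mulVec x) := by
    intro x
    rw [hPdef, ← Matrix.mulVec_mulVec, Matrix.dotProduct_mulVec]
    congr 1
    have hBT : Bᴴ = Bᵀ := by ext i j; simp [Matrix.conjTranspose_apply]
    rw [hBT, Matrix.vecMul_transpose]
  have hQx : ∀ x : Fin N → ℝ, x ⬝ᵥ Q.mulVec x = x ⬝ᵥ x - (B.mulVec x) ⬝ᵥ (B.mulVec x) := by
    intro x
    rw [hQdef, Matrix.sub_mulVec, Matrix.one_mulVec, dotProduct_sub, hdotP]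
  -- sparsity
  have hsu : sparse t u := by
    refine le_trans (Finset.card_le_card ?_) hT
    intro i hi
    simp only [Finset.mem_filter] at hi
    exact Finset.mem_union_left _ ((hu i).mp hi.2)
  have hsv : sparse t v := by
    refine le_trans (Finset.card_le_card ?_) hT
    intro i hi
    simp only [Finset.mem_filter] at hi
    exact Finset.mem_union_right _ ((hv i).mp hi.2)
  -- quadratic bounds
  have hub : u ⬝ᵥ Q.mulVec u ≤ γ * (u ⬝ᵥ u) := by
    have h := hγprop u hsu
    rw [norm2_sq_eq, norm2_sq_eq] at h
    rw [hQx]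
    nlinarith
  have hvb : v ⬝ᵥ Q.mulVec v ≤ γ * (v ⬝ᵥ v) := by
    have h := hγprop v hsv
    rw [norm2_sq_eq, norm2_sq_eq] at h
    rw [hQx]
    nlinarith
  set a := Q.mulVec u with ha
  set b := Q.mulVec v with hb'
  have haa : a ⬝ᵥ a = u ⬝ᵥ Q.mulVec u := (hdotQ u u).symm
  have hbb : b ⬝ᵥ b = v ⬝ᵥ Q.mulVec v := (hdotQ v v).symm
  have hgoal : u ⬝ᵥ Q.mulVec v = a ⬝ᵥ b := hdotQ u v
  rw [hPeq, ← hQdef, hgoal]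
  -- Cauchy–Schwarz
  have hcs : (a ⬝ᵥ b) ^ 2 ≤ (a ⬝ᵥ a) * (b ⬝ᵥ b) := by
    have := Finset.sum_mul_sq_le_sq_mul_sq Finset.univ a b
    simpa [dotProduct, sq] using this
  have habs : |a ⬝ᵥ b| ≤ Real.sqrt ((a ⬝ᵥ a) * (b ⬝ᵥ b)) := by
    rw [← Real.sqrt_sq_eq_abs]
    exact Real.sqrt_le_sqrt hcs
  refine habs.trans ?_
  have huu : 0 ≤ u ⬝ᵥ u := dot_self_nonneg u
  have hvv : 0 ≤ v ⬝ᵥ v := dot_self_nonneg v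
  have hmono : (a ⬝ᵥ a) * (b ⬝ᵥ b) ≤ (γ * (u ⬝ᵥ u)) * (γ * (v ⬝ᵥ v)) := by
    have h1' : 0 ≤ a ⬝ᵥ a := dot_self_nonneg a
    have h2' : 0 ≤ b ⬝ᵥ b := dot_self_nonneg b
    have h3' : a ⬝ᵥ a ≤ γ * (u ⬝ᵥ u) := haa ▸ hub
    have h4' : b ⬝ᵥ b ≤ γ * (v ⬝ᵥ v) := hbb ▸ hvb
    exact mul_le_mul h3' h4' h2' (le_trans h1' h3')
  refine (Real.sqrt_le_sqrt hmono).trans ?_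
  rw [show (γ * (u ⬝ᵥ u)) * (γ * (v ⬝ᵥ v)) = γ ^ 2 * ((u ⬝ᵥ u) * (v ⬝ᵥ v)) by ring,
    Real.sqrt_mul (sq_nonneg γ), Real.sqrt_sq hγ0, Real.sqrt_mul huu,
    norm2_eq_sqrt_dot, norm2_eq_sqrt_dot, mul_assoc]
end

section
/- Let A be a real M×N matrix with restricted isometry constants δ_m(A), and assume δ_k(A) < 1. Let x ∈ ℝ^N be s-sparse, e ∈ ℝ^M, λ > 0, let T be an index set with |T| = k, let v ∈ ℝ^N be supported on T, and let μ ∈ ℝ^N be the vector supported on T defined by μ = v + λ⁻¹·[A*(Ax + e − Av)]_T. Then ‖μ − v‖₂ ≤ ((1+δ_k(A))·√(1+δ_{s+k}(A)) / (λ·√(1−δ_k(A)))) · ‖x − v‖₂ + ((1+δ_k(A)) / (λ·√(1−δ_k(A)))) · ‖e‖₂. -/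
open Matrix

/-- `restrict T x` is the vector agreeing with `x` on `T` and zero outside `T`. -/
def restrict {n : ℕ} (T : Finset (Fin n)) (x : Fin n → ℝ) : Fin n → ℝ :=
  fun i => if i ∈ T then x i else 0

/-- The restricted isometry constant `δ_s(B)`: the smallest `δ ≥ 0` such that
`(1-δ)‖x‖₂² ≤ ‖Bx‖₂² ≤ (1+δ)‖x‖₂²` for all `s`-sparse `x`. -/
noncomputable def ripConst {m n : ℕ} (B : Matrix (Fin m) (Fin n) ℝ) (s : ℕ) : ℝ :=
  sInf {δ : ℝ | 0 ≤ δ ∧ ∀ x : Fin n → ℝ, sparse s x →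
    (1 - δ) * norm2 x ^ 2 ≤ norm2 (B.mulVec x) ^ 2 ∧
      norm2 (B.mulVec x) ^ 2 ≤ (1 + δ) * norm2 x ^ 2}

/-- `θ_t(A) = δ_t((AAᴴ)⁻¹A)`. -/
noncomputable def thetaConst {M N : ℕ} (A : Matrix (Fin M) (Fin N) ℝ) (t : ℕ) : ℝ :=
  ripConst ((A * Aᴴ)⁻¹ * A) t

lemma norm2_eq {n : ℕ} (x : Fin n → ℝ) :
    norm2 x = ‖(WithLp.toLp 2 x : EuclideanSpace ℝ (Fin n))‖ := by
  rw [EuclideanSpace.norm_eq]; simp [norm2, sq_abs]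

lemma norm2_sq {n : ℕ} (x : Fin n → ℝ) : norm2 x ^ 2 = ∑ i, x i ^ 2 := by
  rw [norm2, Real.sq_sqrt]; positivity

lemma norm2_nonneg {n : ℕ} (x : Fin n → ℝ) : 0 ≤ norm2 x := Real.sqrt_nonneg _

lemma ripset_nonempty {m n : ℕ} (B : Matrix (Fin m) (Fin n) ℝ) (s : ℕ) :
    {δ : ℝ | 0 ≤ δ ∧ ∀ x : Fin n → ℝ, sparse s x →
    (1 - δ) * norm2 x ^ 2 ≤ norm2 (B.mulVec x) ^ 2 ∧
      norm2 (B.mulVec x) ^ 2 ≤ (1 + δ) * norm2 x ^ 2}.Nonempty := by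
  set C : ℝ := ∑ i, ∑ j, B i j ^ 2 with hC
  have hC0 : 0 ≤ C := by positivity
  refine ⟨1 + C, by linarith, fun x _ => ?_⟩
  have hx2 : (0:ℝ) ≤ norm2 x ^ 2 := sq_nonneg _
  have hub : norm2 (B.mulVec x) ^ 2 ≤ C * norm2 x ^ 2 := by
    rw [norm2_sq, norm2_sq, hC, Finset.sum_mul]
    refine Finset.sum_le_sum fun i _ => ?_
    exact Finset.sum_mul_sq_le_sq_mul_sq Finset.univ (fun j => B i j) x
  have hBx : (0:ℝ) ≤ norm2 (B.mulVec x) ^ 2 := sq_nonneg _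
  constructor
  · nlinarith
  · nlinarith

lemma ripConst_nonneg {m n : ℕ} (B : Matrix (Fin m) (Fin n) ℝ) (s : ℕ) :
    0 ≤ ripConst B s :=
  le_csInf (ripset_nonempty B s) fun _ hδ => hδ.1

lemma ripConst_spec {m n : ℕ} (B : Matrix (Fin m) (Fin n) ℝ) (s : ℕ)
    (x : Fin n → ℝ) (hx : sparse s x) :
    (1 - ripConst B s) * norm2 x ^ 2 ≤ norm2 (B.mulVec x) ^ 2 ∧
      norm2 (B.mulVec x) ^ 2 ≤ (1 + ripConst B s) * norm2 x ^ 2 := by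
  have hne := ripset_nonempty B s
  have hx2 : (0:ℝ) ≤ norm2 x ^ 2 := sq_nonneg _
  constructor
  · refine le_of_forall_pos_le_add fun ε hε => ?_
    have hε' : 0 < ε / (norm2 x ^ 2 + 1) := by positivity
    obtain ⟨δ', ⟨-, h2⟩, hlt⟩ := Real.lt_sInf_add_pos hne hε'
    have := (h2 x hx).1
    have hble : (δ' - ripConst B s) * norm2 x ^ 2 ≤ ε := by
      have h1 : δ' - ripConst B s ≤ ε / (norm2 x ^ 2 + 1) := by
        have := hlt; simp only [ripConst]; linarith [hlt]
      calc (δ' - ripConst B s) * norm2 x ^ 2 ≤ ε / (norm2 x ^ 2 + 1) * (norm2 x ^ 2 + 1) := by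
            rcases le_or_gt (δ' - ripConst B s) 0 with h | h
            · have : 0 ≤ ε / (norm2 x ^ 2 + 1) * (norm2 x ^ 2 + 1) := by positivity
              nlinarith
            · nlinarith
        _ = ε := by field_simp
    nlinarith
  · refine le_of_forall_pos_le_add fun ε hε => ?_
    have hε' : 0 < ε / (norm2 x ^ 2 + 1) := by positivity
    obtain ⟨δ', ⟨-, h2⟩, hlt⟩ := Real.lt_sInf_add_pos hne hε'
    have := (h2 x hx).2
    have h1 : δ' - ripConst B s ≤ ε / (norm2 x ^ 2 + 1) := by
      simp only [ripConst]; linarith [hlt]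
    have hble : (δ' - ripConst B s) * norm2 x ^ 2 ≤ ε := by
      calc (δ' - ripConst B s) * norm2 x ^ 2 ≤ ε / (norm2 x ^ 2 + 1) * (norm2 x ^ 2 + 1) := by
            rcases le_or_gt (δ' - ripConst B s) 0 with h | h
            · have : 0 ≤ ε / (norm2 x ^ 2 + 1) * (norm2 x ^ 2 + 1) := by positivity
              nlinarith
            · nlinarith
        _ = ε := by field_simp
    nlinarith

lemma rip_upper {m n : ℕ} (B : Matrix (Fin m) (Fin n) ℝ) (s : ℕ)
    (x : Fin n → ℝ) (hx : sparse s x) :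
    norm2 (B.mulVec x) ≤ Real.sqrt (1 + ripConst B s) * norm2 x := by
  have h := (ripConst_spec B s x hx).2
  have h0 : 0 ≤ 1 + ripConst B s := by linarith [ripConst_nonneg B s]
  calc norm2 (B.mulVec x) = Real.sqrt (norm2 (B.mulVec x) ^ 2) := by
        rw [Real.sqrt_sq (norm2_nonneg _)]
    _ ≤ Real.sqrt ((1 + ripConst B s) * norm2 x ^ 2) := Real.sqrt_le_sqrt h
    _ = Real.sqrt (1 + ripConst B s) * norm2 x := by
        rw [Real.sqrt_mul h0, Real.sqrt_sq (norm2_nonneg _)]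

lemma dot_le {n : ℕ} (a b : Fin n → ℝ) : a ⬝ᵥ b ≤ norm2 a * norm2 b := by
  rw [norm2_eq a, norm2_eq b]
  have h := real_inner_le_norm (F := EuclideanSpace ℝ (Fin n)) (WithLp.toLp 2 a) (WithLp.toLp 2 b)
  have h2 : (inner (𝕜 := ℝ) (E := EuclideanSpace ℝ (Fin n)) (WithLp.toLp 2 a) (WithLp.toLp 2 b)) = a ⬝ᵥ b := by
    simp [PiLp.inner_apply, dotProduct, mul_comm, RCLike.inner_apply]
  rwa [h2] at h

lemma norm2_add_le {n : ℕ} (a b : Fin n → ℝ) : norm2 (a + b) ≤ norm2 a + norm2 b := by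
  rw [norm2_eq a, norm2_eq b, norm2_eq (a + b), WithLp.toLp_add]
  exact norm_add_le _ _

lemma norm2_smul {n : ℕ} (c : ℝ) (a : Fin n → ℝ) : norm2 (c • a) = |c| * norm2 a := by
  rw [norm2_eq a, norm2_eq (c • a), WithLp.toLp_smul, norm_smul, Real.norm_eq_abs]

theorem stmt6 {M N : ℕ} (A : Matrix (Fin M) (Fin N) ℝ)
    (s k : ℕ) (hδ : ripConst A k < 1)
    (x : Fin N → ℝ) (hx : sparse s x) (e : Fin M → ℝ)
    (lam : ℝ) (hlam : 0 < lam)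
    (T : Finset (Fin N)) (hT : T.card = k)
    (v : Fin N → ℝ) (hv : ∀ i ∉ T, v i = 0)
    (μ : Fin N → ℝ)
    (hμ : μ = v + lam⁻¹ • restrict T (Aᴴ.mulVec (A.mulVec x + e - A.mulVec v))) :
    norm2 (μ - v) ≤
      (1 + ripConst A k) * Real.sqrt (1 + ripConst A (s + k)) /
        (lam * Real.sqrt (1 - ripConst A k)) * norm2 (x - v) +
      (1 + ripConst A k) / (lam * Real.sqrt (1 - ripConst A k)) * norm2 e := by
  have hδk0 := ripConst_nonneg A k
  have hδsk0 := ripConst_nonneg A (s + k)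
  set δk := ripConst A k with hδkdef
  set δsk := ripConst A (s + k) with hδskdef
  set w : Fin M → ℝ := A.mulVec (x - v) + e with hw
  have hweq : A.mulVec x + e - A.mulVec v = w := by
    rw [hw, Matrix.mulVec_sub]; abel
  set u : Fin N → ℝ := restrict T (Aᴴ.mulVec w) with hu
  have hμv : μ - v = lam⁻¹ • u := by
    rw [hμ, hweq]; exact add_sub_cancel_left v _
  have hnorm : norm2 (μ - v) = lam⁻¹ * norm2 u := by
    rw [hμv, norm2_smul, abs_of_pos (inv_pos.mpr hlam)]
  -- u is k-sparse
  have hsu : sparse k u := by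
    rw [sparse, ← hT]
    apply Finset.card_le_card
    intro i hi
    rw [Finset.mem_filter] at hi
    by_contra h
    exact hi.2 (by simp [hu, restrict, h])
  -- x - v is (s+k)-sparse
  have hsxv : sparse (s + k) (x - v) := by
    rw [sparse]
    calc (Finset.univ.filter fun i => (x - v) i ≠ 0).card
        ≤ ((Finset.univ.filter fun i => x i ≠ 0) ∪ T).card := by
          apply Finset.card_le_card
          intro i hi
          rw [Finset.mem_filter] at hi
          rw [Finset.mem_union, Finset.mem_filter]
          by_contra h
          push_neg at h
          obtain ⟨h1, h2⟩ := h
          exact hi.2 (by simp [Pi.sub_apply, h1 (Finset.mem_univ i), hv i h2])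
      _ ≤ (Finset.univ.filter fun i => x i ≠ 0).card + T.card := Finset.card_union_le _ _
      _ ≤ s + k := by rw [hT]; exact Nat.add_le_add_right hx k
  -- key identity
  have hkey : norm2 u ^ 2 = (A.mulVec u) ⬝ᵥ w := by
    have h1 : norm2 u ^ 2 = u ⬝ᵥ (Aᴴ.mulVec w) := by
      rw [norm2_sq, dotProduct]
      apply Finset.sum_congr rfl
      intro i _
      by_cases h : i ∈ T <;> simp [hu, restrict, h, pow_two]
    rw [h1, Matrix.dotProduct_mulVec]
    congr 1
    ext j
    simp [Matrix.vecMul, Matrix.mulVec, dotProduct, Matrix.conjTranspose_apply, mul_comm]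
  -- norm2 u ≤ √(1+δk) * norm2 w
  have hub : norm2 u ≤ Real.sqrt (1 + δk) * norm2 w := by
    rcases (norm2_nonneg u).eq_or_lt with h0 | h0
    · rw [← h0]; exact mul_nonneg (Real.sqrt_nonneg _) (norm2_nonneg w)
    · have h2 : norm2 u ^ 2 ≤ Real.sqrt (1 + δk) * norm2 u * norm2 w := by
        calc norm2 u ^ 2 = (A.mulVec u) ⬝ᵥ w := hkey
          _ ≤ norm2 (A.mulVec u) * norm2 w := dot_le _ _
          _ ≤ Real.sqrt (1 + δk) * norm2 u * norm2 w :=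
              mul_le_mul_of_nonneg_right (rip_upper A k u hsu) (norm2_nonneg w)
      nlinarith
  -- norm2 w bound
  have hwb : norm2 w ≤ Real.sqrt (1 + δsk) * norm2 (x - v) + norm2 e := by
    calc norm2 w ≤ norm2 (A.mulVec (x - v)) + norm2 e := norm2_add_le _ _
      _ ≤ Real.sqrt (1 + δsk) * norm2 (x - v) + norm2 e := by
          have := rip_upper A (s + k) (x - v) hsxv
          linarith
  -- √(1+δk) ≤ (1+δk)/√(1-δk)
  have hs1 : (0:ℝ) < Real.sqrt (1 - δk) := Real.sqrt_pos.mpr (by linarith)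
  have hkey2 : Real.sqrt (1 + δk) * Real.sqrt (1 - δk) ≤ 1 + δk := by
    rw [← Real.sqrt_mul (by linarith)]
    calc Real.sqrt ((1 + δk) * (1 - δk)) ≤ Real.sqrt ((1 + δk) ^ 2) := by
          apply Real.sqrt_le_sqrt; nlinarith
      _ = 1 + δk := Real.sqrt_sq (by linarith)
  set c := (1 + δk) / Real.sqrt (1 - δk) with hcdef
  have hfrac : Real.sqrt (1 + δk) ≤ c := (le_div_iff₀ hs1).mpr hkey2
  have hc0 : 0 ≤ c := div_nonneg (by linarith) hs1.le
  have hub2 : norm2 u ≤ c * (Real.sqrt (1 + δsk) * norm2 (x - v) + norm2 e) := by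
    calc norm2 u ≤ Real.sqrt (1 + δk) * norm2 w := hub
      _ ≤ c * norm2 w := mul_le_mul_of_nonneg_right hfrac (norm2_nonneg w)
      _ ≤ c * (Real.sqrt (1 + δsk) * norm2 (x - v) + norm2 e) :=
          mul_le_mul_of_nonneg_left hwb hc0
  rw [hnorm]
  have heq : (1 + δk) * Real.sqrt (1 + δsk) / (lam * Real.sqrt (1 - δk)) * norm2 (x - v) +
      (1 + δk) / (lam * Real.sqrt (1 - δk)) * norm2 e
      = lam⁻¹ * (c * (Real.sqrt (1 + δsk) * norm2 (x - v) + norm2 e)) := by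
    rw [hcdef]
    field_simp
  rw [heq]
  exact mul_le_mul_of_nonneg_left hub2 (by positivity)
end
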